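/- Let $d\ge 3$ and $0<s<d$. Let $\Omega\subset\mathbb{R}^d$ be an open set and suppose $K_t(x,y)$ is a measurable kernel on $\Omega\times\Omega$ satisfying $0\le K_t(x,y)\le \big(\tfrac{d(x)}{\sqrt t\wedge D}\wedge 1\big)\big(\tfrac{d(y)}{\sqrt t\wedge D}\wedge 1\big) t^{-d/2} e^{-c|x-y|^2/t}$ for some constants $c>0$, $D>0$, where $d(z)=\operatorname{dist}(z,\Omega^c)$. Then $\int_0^\infty t^{s/2} K_t(x,y)\,\tfrac{dt}{t} \lesssim \tfrac{1}{|x-y|^{d-s}}\big(\tfrac{d(x)}{|x-y|\wedge D}\wedge 1\big)\big(\tfrac{d(y)}{|x-y|\wedge D}\wedge 1\big)$ uniformly for $x,y\in\Omega$, with implicit constant depending on $d,s,c$ only. -/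

import Mathlib

open MeasureTheory Real Set Metric

private lemma aux_int_exp {q r : ℝ} (hq : 0 < q) (hr : 0 < r) :
    IntegrableOn (fun u : ℝ => u ^ (q - 1) * Real.exp (-(r * u))) (Ioi 0) := by
  have h0 : IntegrableOn (fun x : ℝ => Real.exp (-x) * x ^ (q - 1)) (Ioi 0) :=
    Real.GammaIntegral_convergent hq
  have h1 : IntegrableOn (fun u : ℝ => Real.exp (-(r * u)) * (r * u) ^ (q - 1)) (Ioi 0) := by
    have := (integrableOn_Ioi_comp_mul_left_iff
      (fun x : ℝ => Real.exp (-x) * x ^ (q - 1)) 0 hr).mpr ?_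
    · simpa using this
    · simpa using h0
  have h2 : IntegrableOn
      (fun u : ℝ => ((r : ℝ) ^ (q - 1))⁻¹ * (Real.exp (-(r * u)) * (r * u) ^ (q - 1)))
      (Ioi 0) := h1.const_mul _
  refine h2.congr_fun (fun u hu => ?_) measurableSet_Ioi
  have hu0 : (0:ℝ) < u := hu
  beta_reduce
  rw [Real.mul_rpow hr.le hu0.le]
  field_simp [(Real.rpow_pos_of_pos hr (q-1)).ne']

private lemma aux_inv_gamma {α b : ℝ} (hα : α < -1) (hb : 0 < b) :
    IntegrableOn (fun t : ℝ => t ^ α * Real.exp (-(b / t))) (Ioi 0) ∧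
    ∫ t in Ioi 0, t ^ α * Real.exp (-(b / t)) = b ^ (α + 1) * Real.Gamma (-α - 1) := by
  have hq : 0 < -α - 1 := by linarith
  have hgi : IntegrableOn (fun u : ℝ => u ^ (-α - 2) * Real.exp (-(b * u))) (Ioi 0) := by
    have := aux_int_exp hq hb
    simpa [show -α - 1 - 1 = -α - 2 by ring] using this
  have heq : EqOn
      (fun x : ℝ => (|(-1 : ℝ)| * x ^ ((-1 : ℝ) - 1)) •
        ((fun u : ℝ => u ^ (-α - 2) * Real.exp (-(b * u))) (x ^ (-1 : ℝ))))
      (fun t : ℝ => t ^ α * Real.exp (-(b / t))) (Ioi 0) := by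
    intro x hx
    have hx0 : (0:ℝ) < x := hx
    simp only [smul_eq_mul, abs_neg, abs_one, one_mul]
    rw [Real.rpow_neg_one, Real.inv_rpow hx0.le, ← Real.rpow_neg hx0.le,
      ← div_eq_mul_inv]
    have h1 : x ^ ((-1:ℝ) - 1) * x ^ (-(-α - 2)) = x ^ α := by
      rw [← Real.rpow_add hx0]; congr 1; ring
    rw [← mul_assoc, h1]
  constructor
  · exact ((integrableOn_Ioi_comp_rpow_iff _ (by norm_num : (-1:ℝ) ≠ 0)).mpr hgi).congr_fun
      heq measurableSet_Ioi
  · rw [← setIntegral_congr_fun measurableSet_Ioi heq,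
      integral_comp_rpow_Ioi (fun u : ℝ => u ^ (-α - 2) * Real.exp (-(b * u)))
        (by norm_num : (-1:ℝ) ≠ 0)]
    have hv := Real.integral_rpow_mul_exp_neg_mul_Ioi hq hb
    rw [show -α - 1 - 1 = -α - 2 by ring] at hv
    rw [hv, one_div, Real.inv_rpow hb.le, ← Real.rpow_neg hb.le]
    congr 2
    ring

private lemma aux_min_div {m σ ρ : ℝ} (hm : 0 ≤ m) (hσ : 0 < σ) (hρ : 0 < ρ) :
    min (m / σ) 1 ≤ max 1 (ρ / σ) * min (m / ρ) 1 := by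
  rcases le_total m ρ with h | h
  · rw [min_eq_left ((div_le_one hρ).mpr h)]
    calc min (m / σ) 1 ≤ m / σ := min_le_left _ _
      _ = (ρ / σ) * (m / ρ) := by field_simp
      _ ≤ max 1 (ρ / σ) * (m / ρ) := by
          apply mul_le_mul_of_nonneg_right (le_max_right _ _) (by positivity)
  · rw [min_eq_right ((one_le_div hρ).mpr h), mul_one]
    exact le_trans (min_le_right _ _) (le_max_left _ _)

private lemma aux_ratio {u r D : ℝ} (hu : 0 < u) (hD : 0 < D) :
    min r D / min u D ≤ max 1 (r / u) := by
  rcases le_total D u with h | h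
  · rw [min_eq_right h]
    exact le_trans (div_le_one_of_le₀ (min_le_right _ _) hD.le) (le_max_left _ _)
  · rw [min_eq_left h]
    refine le_trans ?_ (le_max_right _ _)
    gcongr
    exact min_le_left _ _

private lemma aux_alg {co r s dd : ℝ} (hc : 0 < co) (hr : 0 < r) :
    (co * r ^ 2) ^ ((s - dd) / 2 - 1 + 1) * Real.Gamma (-((s - dd) / 2 - 1) - 1)
      + r ^ 2 * ((co * r ^ 2) ^ ((s - dd) / 2 - 2 + 1) * Real.Gamma (-((s - dd) / 2 - 2) - 1))
    = (co ^ ((s - dd) / 2) * Real.Gamma ((dd - s) / 2)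
        + co ^ ((s - dd) / 2 - 1) * Real.Gamma ((dd - s) / 2 + 1)) * (1 / r ^ (dd - s)) := by
  have hr2 : (0:ℝ) ≤ r ^ 2 := by positivity
  have e0 : (1:ℝ) / r ^ (dd - s) = r ^ (s - dd) := by
    rw [one_div, ← Real.rpow_neg hr.le, neg_sub]
  have epow : ∀ e : ℝ, (co * r ^ 2) ^ e = co ^ e * r ^ (2 * e) := by
    intro e
    rw [Real.mul_rpow hc.le hr2, ← Real.rpow_natCast r 2, ← Real.rpow_mul hr.le]
    norm_num
  have eg1 : -((s - dd) / 2 - 1) - 1 = (dd - s) / 2 := by ring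
  have eg2 : -((s - dd) / 2 - 2) - 1 = (dd - s) / 2 + 1 := by ring
  have ee1 : (s - dd) / 2 - 1 + 1 = (s - dd) / 2 := by ring
  have ee2 : (s - dd) / 2 - 2 + 1 = (s - dd) / 2 - 1 := by ring
  rw [eg1, eg2, ee1, ee2, epow, epow, e0]
  have h1 : 2 * ((s - dd) / 2) = s - dd := by ring
  rw [h1]
  have h2 : r ^ 2 * (co ^ ((s - dd) / 2 - 1) * r ^ (2 * ((s - dd) / 2 - 1)))
      = co ^ ((s - dd) / 2 - 1) * r ^ (s - dd) := by
    rw [mul_left_comm, ← Real.rpow_natCast r 2, ← Real.rpow_add hr]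
    congr 1
    push_cast
    ring
  linear_combination Real.Gamma ((dd - s) / 2 + 1) * h2

/-- Riesz potential bound: if a kernel `K_t` on an open set `Ω` obeys a Zhang-type heat
kernel upper bound
`0 ≤ K_t(x,y) ≤ (d(x)/(√t ∧ D) ∧ 1)(d(y)/(√t ∧ D) ∧ 1) t^{-d/2} e^{-c|x-y|²/t}`,
then `∫₀^∞ t^{s/2} K_t(x,y) dt/t ≲_{d,s,c} |x-y|^{s-d} (d(x)/(|x-y| ∧ D) ∧ 1)(d(y)/(|x-y| ∧ D) ∧ 1)`,
where `d(z) = dist(z, Ωᶜ)`. -/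
theorem riesz_potential_bound (d : ℕ) (hd : 3 ≤ d) (s c : ℝ) (hs : 0 < s) (hsd : s < d)
    (hc : 0 < c) :
    ∃ C > 0, ∀ (Ω : Set (EuclideanSpace ℝ (Fin d))), IsOpen Ω → ∀ (D : ℝ), 0 < D →
      ∀ (K : ℝ → EuclideanSpace ℝ (Fin d) → EuclideanSpace ℝ (Fin d) → ℝ),
      (∀ t, 0 < t → ∀ x ∈ Ω, ∀ y ∈ Ω,
        0 ≤ K t x y ∧
        K t x y ≤ (min (infDist x Ωᶜ / min (Real.sqrt t) D) 1) *
          (min (infDist y Ωᶜ / min (Real.sqrt t) D) 1) *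
          t ^ (-(d : ℝ) / 2) * Real.exp (-c * ‖x - y‖ ^ 2 / t)) →
      ∀ x ∈ Ω, ∀ y ∈ Ω, x ≠ y →
        (∫ t in Ioi (0 : ℝ), t ^ (s / 2 - 1) * K t x y) ≤
          C * (1 / ‖x - y‖ ^ ((d : ℝ) - s)) *
            (min (infDist x Ωᶜ / min ‖x - y‖ D) 1) *
            (min (infDist y Ωᶜ / min ‖x - y‖ D) 1) := by
  have hd3 : (3:ℝ) ≤ (d:ℝ) := by exact_mod_cast hd
  have hds : s < (d:ℝ) := hsd
  have hC₁ : 0 < c ^ ((s - (d:ℝ)) / 2) * Real.Gamma (((d:ℝ) - s) / 2) :=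
    mul_pos (Real.rpow_pos_of_pos hc _) (Real.Gamma_pos_of_pos (by linarith))
  have hC₂ : 0 < c ^ ((s - (d:ℝ)) / 2 - 1) * Real.Gamma (((d:ℝ) - s) / 2 + 1) :=
    mul_pos (Real.rpow_pos_of_pos hc _) (Real.Gamma_pos_of_pos (by linarith))
  refine ⟨c ^ ((s - (d:ℝ)) / 2) * Real.Gamma (((d:ℝ) - s) / 2)
      + c ^ ((s - (d:ℝ)) / 2 - 1) * Real.Gamma (((d:ℝ) - s) / 2 + 1), by linarith, ?_⟩
  intro Ω hΩ D hD K hK x hx y hy hxy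
  set r : ℝ := ‖x - y‖ with hrdef
  have hr : 0 < r := by
    rw [hrdef, norm_pos_iff]
    exact sub_ne_zero.mpr hxy
  set dx : ℝ := infDist x Ωᶜ with hdxdef
  set dy : ℝ := infDist y Ωᶜ with hdydef
  have hdx : 0 ≤ dx := infDist_nonneg
  have hdy : 0 ≤ dy := infDist_nonneg
  set a : ℝ := min (dx / min r D) 1 with hadef
  set b : ℝ := min (dy / min r D) 1 with hbdef
  have hrD : 0 < min r D := lt_min hr hD
  have ha0 : 0 ≤ a := le_min (by positivity) zero_le_one
  have hb0 : 0 ≤ b := le_min (by positivity) zero_le_one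
  have hcr : 0 < c * r ^ 2 := by positivity
  have hα₁ : (s - (d:ℝ)) / 2 - 1 < -1 := by linarith
  have hα₂ : (s - (d:ℝ)) / 2 - 2 < -1 := by linarith
  obtain ⟨hI1, hV1⟩ := aux_inv_gamma hα₁ hcr
  obtain ⟨hI2, hV2⟩ := aux_inv_gamma hα₂ hcr
  set g : ℝ → ℝ :=
    fun t => a * b * ((t ^ ((s - (d:ℝ)) / 2 - 1) + r ^ 2 * t ^ ((s - (d:ℝ)) / 2 - 2)) *
      Real.exp (-(c * r ^ 2 / t))) with hgdef
  have hgint : IntegrableOn g (Ioi 0) := by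
    have h : IntegrableOn (fun t : ℝ => (a * b) *
        ((t ^ ((s - (d:ℝ)) / 2 - 1) * Real.exp (-(c * r ^ 2 / t))) +
          r ^ 2 * (t ^ ((s - (d:ℝ)) / 2 - 2) * Real.exp (-(c * r ^ 2 / t))))) (Ioi 0) :=
      (hI1.add (hI2.const_mul (r ^ 2))).const_mul (a * b)
    refine h.congr_fun (fun t ht => by rw [hgdef]; ring) measurableSet_Ioi
  -- pointwise bound
  have hpt : ∀ t ∈ Ioi (0:ℝ), t ^ (s / 2 - 1) * K t x y ≤ g t := by
    intro t ht
    have ht0 : (0:ℝ) < t := ht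
    obtain ⟨hK0, hK1⟩ := hK t ht0 x hx y hy
    set u : ℝ := Real.sqrt t with hudef
    have hu : 0 < u := Real.sqrt_pos.mpr ht0
    have huD : 0 < min u D := lt_min hu hD
    set A : ℝ := min (dx / min u D) 1 with hAdef
    set B : ℝ := min (dy / min u D) 1 with hBdef
    set M : ℝ := max 1 (min r D / min u D) with hMdef
    have hM0 : (0:ℝ) ≤ M := le_trans zero_le_one (le_max_left _ _)
    have hA : A ≤ M * a := aux_min_div hdx huD hrD
    have hB : B ≤ M * b := aux_min_div hdy huD hrD
    have hA0 : 0 ≤ A := le_min (by positivity) zero_le_one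
    have hB0 : 0 ≤ B := le_min (by positivity) zero_le_one
    have hM2 : M ^ 2 ≤ 1 + r ^ 2 / t := by
      have h1 : M ≤ max 1 (r / u) := max_le (le_max_left _ _) (aux_ratio hu hD)
      have h2 : (max 1 (r / u)) ^ 2 ≤ 1 + r ^ 2 / t := by
        rcases le_total (r / u) 1 with h | h
        · rw [max_eq_left h, one_pow]
          have : (0:ℝ) ≤ r ^ 2 / t := by positivity
          linarith
        · rw [max_eq_right h, div_pow, hudef, Real.sq_sqrt ht0.le]
          linarith
      calc M ^ 2 ≤ (max 1 (r / u)) ^ 2 := by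
            apply pow_le_pow_left₀ hM0 h1
        _ ≤ 1 + r ^ 2 / t := h2
    have hAB : A * B ≤ (1 + r ^ 2 / t) * (a * b) := by
      calc A * B ≤ (M * a) * (M * b) :=
            mul_le_mul hA hB hB0 (mul_nonneg hM0 ha0)
        _ = M ^ 2 * (a * b) := by ring
        _ ≤ (1 + r ^ 2 / t) * (a * b) :=
            mul_le_mul_of_nonneg_right hM2 (mul_nonneg ha0 hb0)
    have hexp0 : (0:ℝ) ≤ Real.exp (-c * r ^ 2 / t) := (Real.exp_pos _).le
    have hpw0 : (0:ℝ) ≤ t ^ (-(d:ℝ) / 2) := Real.rpow_nonneg ht0.le _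
    calc t ^ (s / 2 - 1) * K t x y
        ≤ t ^ (s / 2 - 1) * (A * B * t ^ (-(d:ℝ) / 2) * Real.exp (-c * r ^ 2 / t)) :=
          mul_le_mul_of_nonneg_left hK1 (Real.rpow_nonneg ht0.le _)
      _ ≤ t ^ (s / 2 - 1) *
            ((1 + r ^ 2 / t) * (a * b) * t ^ (-(d:ℝ) / 2) * Real.exp (-c * r ^ 2 / t)) := by
          apply mul_le_mul_of_nonneg_left ?_ (Real.rpow_nonneg ht0.le _)
          exact mul_le_mul_of_nonneg_right
            (mul_le_mul_of_nonneg_right hAB hpw0) hexp0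
      _ = g t := by
          simp only [hgdef]
          have e1 : t ^ (s / 2 - 1) * t ^ (-(d:ℝ) / 2) = t ^ ((s - (d:ℝ)) / 2 - 1) := by
            rw [← Real.rpow_add ht0]; congr 1; ring
          have e2 : t ^ ((s - (d:ℝ)) / 2 - 2) = t ^ ((s - (d:ℝ)) / 2 - 1) / t := by
            have h := Real.rpow_add ht0 ((s - (d:ℝ)) / 2 - 2) 1
            rw [Real.rpow_one] at h
            rw [eq_div_iff ht0.ne', ← h]
            congr 1
            ring
          have e3 : Real.exp (-c * r ^ 2 / t) = Real.exp (-(c * r ^ 2 / t)) := by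
            congr 1; ring
          rw [e3, e2, ← e1]
          field_simp
  -- assemble
  have hnn : (fun _ : ℝ => (0:ℝ)) ≤ᵐ[volume.restrict (Ioi 0)] fun t => t ^ (s / 2 - 1) * K t x y := by
    filter_upwards [ae_restrict_mem measurableSet_Ioi] with t ht
    exact mul_nonneg (Real.rpow_nonneg (le_of_lt ht) _) (hK t ht x hx y hy).1
  have hle : (fun t => t ^ (s / 2 - 1) * K t x y) ≤ᵐ[volume.restrict (Ioi 0)] g := by
    filter_upwards [ae_restrict_mem measurableSet_Ioi] with t ht
    exact hpt t ht
  have hmono := integral_mono_of_nonneg hnn hgint hle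
  refine le_trans hmono (le_of_eq ?_)
  have hsplit : ∫ t in Ioi (0:ℝ), g t =
      (a * b) * ((∫ t in Ioi (0:ℝ), t ^ ((s - (d:ℝ)) / 2 - 1) * Real.exp (-(c * r ^ 2 / t))) +
        r ^ 2 * ∫ t in Ioi (0:ℝ), t ^ ((s - (d:ℝ)) / 2 - 2) * Real.exp (-(c * r ^ 2 / t))) := by
    rw [show g = fun t => (a * b) *
        ((t ^ ((s - (d:ℝ)) / 2 - 1) * Real.exp (-(c * r ^ 2 / t))) +
          r ^ 2 * (t ^ ((s - (d:ℝ)) / 2 - 2) * Real.exp (-(c * r ^ 2 / t)))) from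
      funext fun t => by rw [hgdef]; ring]
    rw [integral_const_mul, integral_add hI1 (hI2.const_mul _), integral_const_mul]
  rw [hsplit, hV1, hV2, aux_alg (co := c) (r := r) (s := s) (dd := (d:ℝ)) hc hr]
  ring
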